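/- For a prime p and positive integer k, the integer (p^k - 1)! / [ (p^{k-1})! · (p^{k-2})! · ... · p! · 1! ]^{p-1} is an integer not divisible by p. -/

import Mathlib

open Finset

private lemma geom_aux (p : ℕ) (hp : 2 ≤ p) : ∀ m : ℕ,
    (p - 1) * ∑ t ∈ range m, p ^ t = p ^ m - 1 := by
  intro m
  induction m with
  | zero => simp
  | succ m ih =>
    rw [Finset.sum_range_succ, Nat.mul_add, ih, pow_succ]
    have h1 : 1 ≤ p ^ m := Nat.one_le_pow _ _ (by omega)
    have h2 : (p - 1) * p ^ m = p ^ m * p - p ^ m := by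
      rw [Nat.sub_mul, one_mul, mul_comm]
    have h3 : p ^ m ≤ p ^ m * p := Nat.le_mul_of_pos_right _ (by omega)
    omega

private lemma div_aux (p k i : ℕ) (hp : 2 ≤ p) (hik : i ≤ k) :
    (p ^ k - 1) / p ^ i = p ^ (k - i) - 1 := by
  have hb : 1 ≤ p ^ i := Nat.one_le_pow _ _ (by omega)
  have ha : 1 ≤ p ^ (k - i) := Nat.one_le_pow _ _ (by omega)
  have hab : p ^ (k - i) * p ^ i = p ^ k := by
    rw [← pow_add]; congr 1; omega
  have key : p ^ k - 1 = (p ^ i - 1) + (p ^ (k - i) - 1) * p ^ i := by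
    have h : (p ^ (k - i) - 1) * p ^ i = p ^ (k - i) * p ^ i - p ^ i := by
      rw [Nat.sub_mul, one_mul]
    have hle : p ^ i ≤ p ^ k := hab ▸ Nat.le_mul_of_pos_left _ (by omega)
    omega
  rw [key, Nat.add_mul_div_right _ _ (by omega), Nat.div_eq_of_lt (by omega), zero_add]

private lemma padic_prod {p : ℕ} (hp : p.Prime) {α : Type*} (s : Finset α) (f : α → ℕ)
    (hf : ∀ x ∈ s, f x ≠ 0) :
    padicValNat p (∏ x ∈ s, f x) = ∑ x ∈ s, padicValNat p (f x) := by
  have h1 : (∏ x ∈ s, f x).factorization p = ∑ x ∈ s, (f x).factorization p := by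
    rw [Nat.factorization_prod hf]; simp [Finsupp.finset_sum_apply]
  simpa only [Nat.factorization_def _ hp] using h1

/-- For a prime `p` and `k ≥ 1`, the multinomial coefficient
`(p^k - 1)! / [(p^{k-1})! ⋯ p! 1!]^{p-1}` is an integer not divisible by `p`. -/
theorem multinomial_L_not_div (p k : ℕ) (hp : p.Prime) (hk : 1 ≤ k) :
    ((∏ j ∈ Finset.range k, Nat.factorial (p ^ j)) ^ (p - 1)) ∣ Nat.factorial (p ^ k - 1) ∧
    ¬ p ∣ (Nat.factorial (p ^ k - 1) /
      ((∏ j ∈ Finset.range k, Nat.factorial (p ^ j)) ^ (p - 1))) := by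
  haveI : Fact p.Prime := ⟨hp⟩
  have hp2 : 2 ≤ p := hp.two_le
  set D : ℕ := (∏ j ∈ Finset.range k, Nat.factorial (p ^ j)) ^ (p - 1) with hD
  -- divisibility via multinomials
  have hdvd : D ∣ Nat.factorial (p ^ k - 1) := by
    have key := Nat.prod_factorial_dvd_factorial_sum
      ((range k) ×ˢ (range (p - 1))) (fun x => p ^ x.1)
    have hsum : (∑ x ∈ (range k) ×ˢ (range (p - 1)), p ^ x.1) = p ^ k - 1 := by
      rw [Finset.sum_product]
      simp only [Finset.sum_const, smul_eq_mul, Finset.card_range]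
      rw [← Finset.mul_sum, geom_aux p hp2 k]
    have hprod : (∏ x ∈ (range k) ×ˢ (range (p - 1)), Nat.factorial (p ^ x.1)) = D := by
      rw [Finset.prod_product]
      simp [hD, Finset.prod_pow]
    rw [hsum, hprod] at key
    exact key
  refine ⟨hdvd, ?_⟩
  have hN0 : 0 < Nat.factorial (p ^ k - 1) := Nat.factorial_pos _
  have hP0 : (∏ j ∈ Finset.range k, Nat.factorial (p ^ j)) ≠ 0 := by
    exact Finset.prod_ne_zero_iff.mpr fun j _ => Nat.factorial_ne_zero _
  have hD0 : 0 < D := by positivity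
  have hq0 : 0 < Nat.factorial (p ^ k - 1) / D :=
    Nat.div_pos (Nat.le_of_dvd hN0 hdvd) hD0
  -- valuations
  have hlogN : Nat.log p (p ^ k - 1) < k := by
    apply Nat.log_lt_of_lt_pow
    · have h1 : 1 ≤ p ^ k := Nat.one_le_pow _ _ (by omega)
      have h2 : p ≤ p ^ k := Nat.le_self_pow (by omega) p
      omega
    · have : 1 ≤ p ^ k := Nat.one_le_pow _ _ (by omega)
      omega
  have hvN : padicValNat p (Nat.factorial (p ^ k - 1)) =
      ∑ i ∈ Ico 1 k, (p ^ k - 1) / p ^ i := padicValNat_factorial hlogN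
  have hvj : ∀ j ∈ range k, padicValNat p (Nat.factorial (p ^ j)) =
      ∑ i ∈ Ico 1 k, p ^ j / p ^ i := by
    intro j hj
    apply padicValNat_factorial
    rw [Nat.log_pow (by omega)]
    exact Finset.mem_range.mp hj
  have hvD : padicValNat p D = padicValNat p (Nat.factorial (p ^ k - 1)) := by
    rw [hD, padicValNat.pow _ _,
      padic_prod hp _ _ (fun j _ => Nat.factorial_ne_zero _),
      Finset.sum_congr rfl hvj, hvN, Finset.sum_comm, Finset.mul_sum]
    apply Finset.sum_congr rfl
    intro i hi
    obtain ⟨hi1, hik⟩ := Finset.mem_Ico.mp hi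
    have hik' : i ≤ k := le_of_lt hik
    -- inner sum over j
    have hinner : (∑ j ∈ range k, p ^ j / p ^ i) = ∑ t ∈ range (k - i), p ^ t := by
      rw [Finset.range_eq_Ico, ← Finset.sum_Ico_consecutive _ (Nat.zero_le i) hik']
      have h1 : (∑ j ∈ Ico 0 i, p ^ j / p ^ i) = 0 := by
        apply Finset.sum_eq_zero
        intro j hj
        exact Nat.div_eq_of_lt (Nat.pow_lt_pow_right (by omega) (Finset.mem_Ico.mp hj).2)
      rw [h1, zero_add, Finset.sum_Ico_eq_sum_range]
      apply Finset.sum_congr rfl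
      intro t ht
      rw [Nat.pow_div (by omega) (by omega), Nat.add_sub_cancel_left]
    rw [hinner, geom_aux p hp2, div_aux p k i hp2 hik']
  intro hpd
  have := padicValNat.div_of_dvd (p := p) hdvd
  rw [hvD, Nat.sub_self] at this
  rcases padicValNat.eq_zero_iff.mp this with h | h | h
  · omega
  · omega
  · exact h hpd
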